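/- Let h_i, e_j be as in the 1D construction and consider the 2D tensor-product expansion F(ξ,η) = ∑_{i,j=0}^N F_{i,j} h_i(ξ) h_j(η). Then the vector curl of F is curl F = (∑_{i=0}^N ∑_{j=1}^N (F_{i,j} - F_{i,j-1}) h_i(ξ) e_j(η), ∑_{i=1}^N ∑_{j=0}^N (F_{i-1,j} - F_{i,j}) e_i(ξ) h_j(η)). -/

import Mathlib

open Polynomial Finset

lemma stmt17_key (N : ℕ) (h e : ℕ → Polynomial ℝ)
    (he : ∀ i, e i = -∑ k ∈ range i, derivative (h k))
    (hz : (∑ k ∈ range (N + 1), derivative (h k)) = 0)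
    (d : ℕ → ℝ) (x : ℝ) :
    ∑ j ∈ range (N + 1), d j * (derivative (h j)).eval x =
      ∑ j ∈ Icc 1 N, (d j - d (j - 1)) * (e j).eval x := by
  have hb := Finset.sum_range_by_parts (fun j => d j)
    (fun j => (derivative (h j)).eval x) (N + 1)
  simp only [smul_eq_mul, Nat.add_sub_cancel] at hb
  have hG : ∑ i ∈ range (N + 1), (derivative (h i)).eval x = 0 := by
    rw [← Polynomial.eval_finset_sum, hz, Polynomial.eval_zero]
  rw [hb, hG, mul_zero, zero_sub]
  rw [show Icc 1 N = Ico 1 (N + 1) by rw [Finset.Ico_add_one_right_eq_Icc],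
    Finset.sum_Ico_eq_sum_range, Nat.add_sub_cancel, ← Finset.sum_neg_distrib]
  refine Finset.sum_congr rfl fun i _ => ?_
  have hei : (e (1 + i)).eval x = -∑ j ∈ range (1 + i), (derivative (h j)).eval x := by
    rw [he (1 + i)]; simp [Polynomial.eval_finset_sum]
  rw [show 1 + i - 1 = i by omega, show i + 1 = 1 + i by omega, hei]
  ring

/-- For the 2D tensor-product expansion
`F(ξ,η) = ∑_{i,j=0}^N c i j · h i (ξ) · h j (η)` in Lagrange bases, the vector curl
`curl F = (∂F/∂η, -∂F/∂ξ)` has the expansion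
`(∑_{i=0}^N ∑_{j=1}^N (c i j - c i (j-1)) h i (ξ) e j (η),
  ∑_{i=1}^N ∑_{j=0}^N (c (i-1) j - c i j) e i (ξ) h j (η))`. -/
theorem stmt17 (N : ℕ) (ξ : ℕ → ℝ) (h e : ℕ → Polynomial ℝ)
    (hξmono : ∀ i j, i < j → j ≤ N → ξ i < ξ j)
    (hξmem : ∀ i ≤ N, ξ i ∈ Set.Icc (-1 : ℝ) 1)
    (hdeg : ∀ i ≤ N, (h i).natDegree ≤ N)
    (heval : ∀ i ≤ N, ∀ j ≤ N, (h i).eval (ξ j) = if i = j then 1 else 0)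
    (he : ∀ i, e i = -∑ k ∈ range i, derivative (h k))
    (c : ℕ → ℕ → ℝ) (F : ℝ → ℝ → ℝ)
    (hF : ∀ x y, F x y = ∑ i ∈ range (N + 1), ∑ j ∈ range (N + 1),
      c i j * (h i).eval x * (h j).eval y) :
    ∀ x y,
      (deriv (fun t => F x t) y =
        ∑ i ∈ range (N + 1), ∑ j ∈ Icc 1 N,
          (c i j - c i (j - 1)) * (h i).eval x * (e j).eval y) ∧
      (-deriv (fun s => F s y) x =
        ∑ i ∈ Icc 1 N, ∑ j ∈ range (N + 1),
          (c (i - 1) j - c i j) * (e i).eval x * (h j).eval y) := by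
  -- The sum of the Lagrange basis polynomials is 1
  have hsum1 : (∑ k ∈ range (N + 1), h k) = Polynomial.C 1 := by
    have hzero : (∑ k ∈ range (N + 1), h k) - Polynomial.C 1 = 0 := by
      apply Polynomial.eq_zero_of_natDegree_lt_card_of_eval_eq_zero _
        (f := fun i : Fin (N + 1) => ξ i)
      · intro a b hab
        rcases lt_trichotomy (a : ℕ) (b : ℕ) with hlt | heq | hgt
        · exact absurd hab (ne_of_lt (hξmono a b hlt (by omega)))
        · exact Fin.ext heq
        · exact absurd hab.symm (ne_of_lt (hξmono b a hgt (by omega)))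
      · intro i
        simp only [Polynomial.eval_sub, Polynomial.eval_finset_sum, Polynomial.eval_C]
        have : ∑ k ∈ range (N + 1), (h k).eval (ξ i) = 1 := by
          rw [Finset.sum_congr rfl fun k hk =>
            heval k (by simpa [Nat.lt_succ_iff] using Finset.mem_range.mp hk) i (by omega)]
          simp
          exact Nat.lt_succ_iff.mp i.isLt
        rw [this]; ring
      · calc ((∑ k ∈ range (N + 1), h k) - Polynomial.C 1).natDegree
            ≤ max (∑ k ∈ range (N + 1), h k).natDegree (Polynomial.C (1:ℝ)).natDegree :=
              Polynomial.natDegree_sub_le _ _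
          _ < N + 1 := by
              apply max_lt
              · exact Nat.lt_succ_of_le <|
                  Polynomial.natDegree_sum_le_of_forall_le _ _ fun k hk => hdeg k
                    (by simpa [Nat.lt_succ_iff] using Finset.mem_range.mp hk)
              · simp
          _ = Fintype.card (Fin (N + 1)) := by simp
    have := sub_eq_zero.mp hzero
    simpa using this
  have hz : (∑ k ∈ range (N + 1), derivative (h k)) = 0 := by
    have := congrArg Polynomial.derivative hsum1
    simpa [Polynomial.derivative_sum] using this
  intro x y
  -- derivative in second variable
  have hd2 : HasDerivAt (fun t => F x t)
      (∑ i ∈ range (N + 1), ∑ j ∈ range (N + 1),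
        c i j * (h i).eval x * (derivative (h j)).eval y) y := by
    have heq : (fun t => F x t) = fun t => ∑ i ∈ range (N + 1), ∑ j ∈ range (N + 1),
        c i j * (h i).eval x * (h j).eval t := funext fun t => hF x t
    rw [heq]
    apply HasDerivAt.fun_sum
    intro i _
    apply HasDerivAt.fun_sum
    intro j _
    exact ((h j).hasDerivAt y).const_mul (c i j * (h i).eval x)
  have hd1 : HasDerivAt (fun s => F s y)
      (∑ i ∈ range (N + 1), ∑ j ∈ range (N + 1),
        c i j * (derivative (h i)).eval x * (h j).eval y) x := by
    have heq : (fun s => F s y) = fun s => ∑ i ∈ range (N + 1), ∑ j ∈ range (N + 1),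
        c i j * (h i).eval s * (h j).eval y := funext fun s => hF s y
    rw [heq]
    apply HasDerivAt.fun_sum
    intro i _
    have : HasDerivAt (fun s => ∑ j ∈ range (N + 1), c i j * (h i).eval s * (h j).eval y)
        ((∑ j ∈ range (N + 1), c i j * (h j).eval y) * (derivative (h i)).eval x) x := by
      have heq2 : (fun s => ∑ j ∈ range (N + 1), c i j * (h i).eval s * (h j).eval y)
          = fun s => (∑ j ∈ range (N + 1), c i j * (h j).eval y) * (h i).eval s := by
        funext s; rw [Finset.sum_mul]; exact Finset.sum_congr rfl fun j _ => by ring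
      rw [heq2]
      exact ((h i).hasDerivAt x).const_mul _
    refine this.congr_deriv ?_
    rw [Finset.sum_mul]
    exact Finset.sum_congr rfl fun j _ => by ring
  constructor
  · rw [hd2.deriv]
    refine Finset.sum_congr rfl fun i _ => ?_
    have := stmt17_key N h e he hz (fun j => c i j * (h i).eval x) y
    rw [show (∑ j ∈ range (N + 1), c i j * (h i).eval x * (derivative (h j)).eval y)
        = ∑ j ∈ range (N + 1), (fun j => c i j * (h i).eval x) j * (derivative (h j)).eval y
        from rfl, this]
    exact Finset.sum_congr rfl fun j _ => by ring
  · rw [hd1.deriv]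
    rw [Finset.sum_comm, ← Finset.sum_neg_distrib]
    rw [Finset.sum_comm (s := Icc 1 N)]
    refine Finset.sum_congr rfl fun j _ => ?_
    have := stmt17_key N h e he hz (fun i => c i j * (h j).eval y) x
    rw [show (∑ i ∈ range (N + 1), c i j * (derivative (h i)).eval x * (h j).eval y)
        = ∑ i ∈ range (N + 1), (fun i => c i j * (h j).eval y) i * (derivative (h i)).eval x
        from Finset.sum_congr rfl fun i _ => by ring, this, ← Finset.sum_neg_distrib]
    exact Finset.sum_congr rfl fun i _ => by ring
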